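/- Let ψ = v v† be a pure state on n qubits and P ∈ P_n. Then Σ_{Q ∈ P_n, PQ = QP} p_ψ(Q) = (1 + tr(Pψ)²)/2; that is, the probability under the Pauli distribution p_ψ that a sampled Pauli commutes with P equals (1 + tr(Pψ)²)/2. -/

import Mathlib

open Matrix
open scoped Classical

noncomputable section

/-- The four 2×2 Pauli matrices: `0 ↦ I`, `1 ↦ X`, `2 ↦ Y`, `3 ↦ Z`. -/
def pauli1 : Fin 4 → Matrix (Fin 2) (Fin 2) ℂ
  | 0 => !![1, 0; 0, 1]
  | 1 => !![0, 1; 1, 0]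
  | 2 => !![0, -Complex.I; Complex.I, 0]
  | 3 => !![1, 0; 0, -1]

/-- The `n`-qubit Pauli operator associated to the string `s : Fin n → Fin 4`. -/
def PauliOp (n : ℕ) (s : Fin n → Fin 4) :
    Matrix (Fin n → Fin 2) (Fin n → Fin 2) ℂ :=
  Matrix.of fun i j => ∏ a, pauli1 (s a) (i a) (j a)

/-- The Pauli distribution of a state `ψ`: `p_ψ(P) = tr(Pψ)² / 2^n`. -/
def pDist (n : ℕ) (ψ : Matrix (Fin n → Fin 2) (Fin n → Fin 2) ℂ)
    (s : Fin n → Fin 4) : ℝ :=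
  ((Matrix.trace (PauliOp n s * ψ)).re) ^ 2 / 2 ^ n

def eps1 (σ τ : Fin 4) : ℝ := if σ = 0 ∨ τ = 0 ∨ σ = τ then 1 else -1

lemma pauli1_sq (σ : Fin 4) : pauli1 σ * pauli1 σ = 1 := by
  fin_cases σ <;>
    · ext i j
      fin_cases i <;> fin_cases j <;>
        simp [pauli1, Matrix.mul_apply, Fin.sum_univ_two, Matrix.one_apply, Complex.ext_iff]

lemma pauli1_comm (σ τ : Fin 4) :
    pauli1 σ * pauli1 τ = (eps1 σ τ : ℂ) • (pauli1 τ * pauli1 σ) := by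
  fin_cases σ <;> fin_cases τ <;>
    · ext i j
      fin_cases i <;> fin_cases j <;>
        simp [pauli1, eps1, Matrix.mul_apply, Fin.sum_univ_two, Complex.ext_iff]

lemma pauli1_star (σ : Fin 4) (i j : Fin 2) :
    starRingEnd ℂ (pauli1 σ i j) = pauli1 σ j i := by
  fin_cases σ <;> fin_cases i <;> fin_cases j <;> simp [pauli1]

lemma pauli1_ortho (i j k l : Fin 2) :
    ∑ σ : Fin 4, pauli1 σ i j * pauli1 σ k l = if i = l ∧ j = k then 2 else 0 := by
  fin_cases i <;> fin_cases j <;> fin_cases k <;> fin_cases l <;>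
    norm_num [Fin.sum_univ_four, pauli1, Complex.ext_iff]

lemma PauliOp_mul_apply (n : ℕ) (s t : Fin n → Fin 4) (i j : Fin n → Fin 2) :
    (PauliOp n s * PauliOp n t) i j = ∏ a, (pauli1 (s a) * pauli1 (t a)) (i a) (j a) := by
  rw [Matrix.mul_apply]
  have h : ∏ a, (pauli1 (s a) * pauli1 (t a)) (i a) (j a)
      = ∏ a, ∑ m ∈ (Finset.univ : Finset (Fin 2)),
          pauli1 (s a) (i a) m * pauli1 (t a) m (j a) := by
    apply Finset.prod_congr rfl; intro a _; rw [Matrix.mul_apply]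
  rw [h, Finset.prod_univ_sum, Fintype.piFinset_univ]
  apply Finset.sum_congr rfl
  intro k _
  simp [PauliOp, Finset.prod_mul_distrib]


def Eps (n : ℕ) (s t : Fin n → Fin 4) : ℝ := ∏ a, eps1 (s a) (t a)

lemma PauliOp_sq (n : ℕ) (s : Fin n → Fin 4) : PauliOp n s * PauliOp n s = 1 := by
  ext i j
  rw [PauliOp_mul_apply]
  simp only [pauli1_sq]
  by_cases h : i = j
  · subst h; simp [Matrix.one_apply]
  · have : ∃ a, i a ≠ j a := by
      by_contra hall; push_neg at hall; exact h (funext hall)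
    obtain ⟨a, ha⟩ := this
    rw [Matrix.one_apply_ne h]
    exact Finset.prod_eq_zero (Finset.mem_univ a) (by simp [Matrix.one_apply, ha])

lemma PauliOp_comm (n : ℕ) (s t : Fin n → Fin 4) :
    PauliOp n s * PauliOp n t = ((Eps n s t : ℝ) : ℂ) • (PauliOp n t * PauliOp n s) := by
  ext i j
  rw [Matrix.smul_apply, PauliOp_mul_apply, PauliOp_mul_apply, smul_eq_mul]
  have h : ∀ a : Fin n, (pauli1 (s a) * pauli1 (t a)) (i a) (j a)
      = ((eps1 (s a) (t a) : ℝ) : ℂ) * (pauli1 (t a) * pauli1 (s a)) (i a) (j a) := by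
    intro a; rw [pauli1_comm]; simp
  rw [Finset.prod_congr rfl (fun a _ => h a), Finset.prod_mul_distrib, Eps,
    Complex.ofReal_prod]

lemma PauliOp_star (n : ℕ) (s : Fin n → Fin 4) : (PauliOp n s)ᴴ = PauliOp n s := by
  ext i j
  simp only [Matrix.conjTranspose_apply, PauliOp, Matrix.of_apply, star_prod]
  exact Finset.prod_congr rfl fun a _ => pauli1_star (s a) (j a) (i a)

lemma PauliOp_ortho (n : ℕ) (i j k l : Fin n → Fin 2) :
    ∑ t : Fin n → Fin 4, PauliOp n t i j * PauliOp n t k l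
      = if i = l ∧ j = k then (2 ^ n : ℂ) else 0 := by
  have h : ∀ t : Fin n → Fin 4, PauliOp n t i j * PauliOp n t k l
      = ∏ a, (pauli1 (t a) (i a) (j a) * pauli1 (t a) (k a) (l a)) := by
    intro t; simp [PauliOp, Finset.prod_mul_distrib]
  simp_rw [h]
  have hps := Finset.prod_univ_sum (fun _ : Fin n => (Finset.univ : Finset (Fin 4)))
      (fun a m => pauli1 m (i a) (j a) * pauli1 m (k a) (l a))
  rw [Fintype.piFinset_univ] at hps
  rw [← hps]
  simp_rw [pauli1_ortho]
  by_cases hc : i = l ∧ j = k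
  · rw [if_pos hc]
    rw [Finset.prod_congr rfl (fun a _ => if_pos ⟨congrFun hc.1 a, congrFun hc.2 a⟩)]
    simp
  · rw [if_neg hc]
    have : ∃ a, ¬(i a = l a ∧ j a = k a) := by
      by_contra hall
      push_neg at hall
      exact hc ⟨funext fun a => (hall a).1, funext fun a => (hall a).2⟩
    obtain ⟨a, ha⟩ := this
    exact Finset.prod_eq_zero (Finset.mem_univ a) (if_neg ha)

lemma trace_mul_pair {n : ℕ} (M N : Matrix (Fin n → Fin 2) (Fin n → Fin 2) ℂ) :
    Matrix.trace (M * N)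
      = ∑ p : (Fin n → Fin 2) × (Fin n → Fin 2), M p.1 p.2 * N p.2 p.1 := by
  rw [Matrix.trace]
  simp [Matrix.diag, Matrix.mul_apply, Fintype.sum_prod_type]

lemma pauli_parseval (n : ℕ) (A B : Matrix (Fin n → Fin 2) (Fin n → Fin 2) ℂ) :
    ∑ t : Fin n → Fin 4,
        Matrix.trace (PauliOp n t * A) * Matrix.trace (PauliOp n t * B)
      = (2 ^ n : ℂ) * Matrix.trace (A * B) := by
  calc ∑ t : Fin n → Fin 4,
        Matrix.trace (PauliOp n t * A) * Matrix.trace (PauliOp n t * B)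
      = ∑ t : Fin n → Fin 4, ∑ p : (Fin n → Fin 2) × (Fin n → Fin 2),
          ∑ q : (Fin n → Fin 2) × (Fin n → Fin 2),
            (PauliOp n t p.1 p.2 * PauliOp n t q.1 q.2) * (A p.2 p.1 * B q.2 q.1) := by
        apply Finset.sum_congr rfl; intro t _
        rw [trace_mul_pair, trace_mul_pair, Finset.sum_mul_sum]
        apply Finset.sum_congr rfl; intro p _
        apply Finset.sum_congr rfl; intro q _
        ring
    _ = ∑ p : (Fin n → Fin 2) × (Fin n → Fin 2),
          ∑ q : (Fin n → Fin 2) × (Fin n → Fin 2),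
            (∑ t : Fin n → Fin 4, PauliOp n t p.1 p.2 * PauliOp n t q.1 q.2)
              * (A p.2 p.1 * B q.2 q.1) := by
        rw [Finset.sum_comm]
        apply Finset.sum_congr rfl; intro p _
        rw [Finset.sum_comm]
        apply Finset.sum_congr rfl; intro q _
        rw [Finset.sum_mul]
    _ = ∑ p : (Fin n → Fin 2) × (Fin n → Fin 2),
          (2 ^ n : ℂ) * (A p.2 p.1 * B p.1 p.2) := by
        apply Finset.sum_congr rfl; intro p _
        simp_rw [PauliOp_ortho]
        rw [Finset.sum_eq_single (p.2, p.1)]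
        · simp
        · intro q _ hq
          rw [if_neg, zero_mul]
          rintro ⟨h1, h2⟩
          exact hq (Prod.ext h2.symm h1.symm)
        · intro h; exact absurd (Finset.mem_univ _) h
    _ = (2 ^ n : ℂ) * Matrix.trace (A * B) := by
        rw [← Finset.mul_sum, trace_mul_comm, trace_mul_pair]
        congr 1
        apply Finset.sum_congr rfl; intro p _; ring

section tracevec
variable {n : ℕ} (A : Matrix (Fin n → Fin 2) (Fin n → Fin 2) ℂ)
  (v w u : (Fin n → Fin 2) → ℂ)

lemma trace_mul_vmv :
    Matrix.trace (A * Matrix.vecMulVec v w) = w ⬝ᵥ (A *ᵥ v) := by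
  rw [Matrix.trace]
  simp only [Matrix.diag, Matrix.mul_apply, Matrix.vecMulVec_apply, Matrix.mulVec,
    dotProduct, Finset.mul_sum]
  apply Finset.sum_congr rfl; intro i _
  apply Finset.sum_congr rfl; intro j _
  ring

lemma vmv_mulVec : (Matrix.vecMulVec v w) *ᵥ u = (w ⬝ᵥ u) • v := by
  funext i
  simp [Matrix.mulVec, Matrix.vecMulVec, dotProduct, Finset.sum_mul, Finset.mul_sum]
  apply Finset.sum_congr rfl; intro j _; ring

end tracevec

lemma vmv_herm {n : ℕ} (v : (Fin n → Fin 2) → ℂ) :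
    (Matrix.vecMulVec v (star v))ᴴ = Matrix.vecMulVec v (star v) := by
  ext i j
  simp [Matrix.conjTranspose_apply, Matrix.vecMulVec_apply, mul_comm]

lemma trace_pauli_real {n : ℕ} (v : (Fin n → Fin 2) → ℂ) (t : Fin n → Fin 4) :
    Matrix.trace (PauliOp n t * Matrix.vecMulVec v (star v))
      = (((Matrix.trace (PauliOp n t * Matrix.vecMulVec v (star v))).re : ℝ) : ℂ) := by
  set z := Matrix.trace (PauliOp n t * Matrix.vecMulVec v (star v)) with hz
  have hconj : (starRingEnd ℂ) z = z := by
    rw [hz]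
    calc (starRingEnd ℂ) (Matrix.trace (PauliOp n t * Matrix.vecMulVec v (star v)))
        = Matrix.trace ((PauliOp n t * Matrix.vecMulVec v (star v))ᴴ) := by
          rw [Matrix.trace_conjTranspose]; rfl
      _ = Matrix.trace (Matrix.vecMulVec v (star v) * PauliOp n t) := by
          rw [Matrix.conjTranspose_mul, vmv_herm, PauliOp_star]
      _ = Matrix.trace (PauliOp n t * Matrix.vecMulVec v (star v)) := trace_mul_comm _ _
  exact ((Complex.conj_eq_iff_re).mp hconj).symm

lemma eps1_cases (σ τ : Fin 4) : eps1 σ τ = 1 ∨ eps1 σ τ = -1 := by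
  unfold eps1; split <;> simp

lemma Eps_cases (n : ℕ) (s t : Fin n → Fin 4) : Eps n s t = 1 ∨ Eps n s t = -1 := by
  have h : Eps n s t * Eps n s t = 1 := by
    unfold Eps
    rw [← Finset.prod_mul_distrib]
    apply Finset.prod_eq_one
    intro a _
    rcases eps1_cases (s a) (t a) with h1 | h1 <;> rw [h1] <;> norm_num
  exact mul_self_eq_one_iff.mp h

theorem pauli_dist_commuting_mass (n : ℕ) (hn : 1 ≤ n)
    (v : (Fin n → Fin 2) → ℂ) (hv : star v ⬝ᵥ v = 1) (s : Fin n → Fin 4) :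
    ∑ s' ∈ Finset.univ.filter (fun s' : Fin n → Fin 4 =>
        PauliOp n s * PauliOp n s' = PauliOp n s' * PauliOp n s),
      pDist n (Matrix.vecMulVec v (star v)) s' =
    (1 + ((Matrix.trace (PauliOp n s * Matrix.vecMulVec v (star v))).re) ^ 2) / 2 := by
  set ψ := Matrix.vecMulVec v (star v) with hψ
  set P := PauliOp n s with hP
  set T : (Fin n → Fin 4) → ℝ := fun u => (Matrix.trace (PauliOp n u * ψ)).re with hT
  have hreal : ∀ u, Matrix.trace (PauliOp n u * ψ) = ((T u : ℝ) : ℂ) := fun u =>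
    trace_pauli_real v u
  -- ψ *ᵥ x = (star v ⬝ᵥ x) • v
  have hψv : ∀ x, ψ *ᵥ x = (star v ⬝ᵥ x) • v := fun x => vmv_mulVec v (star v) x
  -- trace (ψ * ψ) = 1
  have htr1 : Matrix.trace (ψ * ψ) = 1 := by
    rw [hψ, trace_mul_vmv, ← hψ, hψv, hv, one_smul, hv]
  -- the conjugated state
  have hPQP : ∀ u, P * PauliOp n u * P = ((Eps n s u : ℝ) : ℂ) • PauliOp n u := by
    intro u
    rw [hP, PauliOp_comm n s u, Matrix.smul_mul, mul_assoc, PauliOp_sq, mul_one]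
  have htrconj : ∀ u, Matrix.trace (PauliOp n u * (P * ψ * P))
      = ((Eps n s u : ℝ) : ℂ) * Matrix.trace (PauliOp n u * ψ) := by
    intro u
    have h1 : PauliOp n u * (P * ψ * P) = (PauliOp n u * P * ψ) * P := by
      simp only [mul_assoc]
    rw [h1, trace_mul_comm, show P * (PauliOp n u * P * ψ) = (P * PauliOp n u * P) * ψ by
      simp only [mul_assoc], hPQP, Matrix.smul_mul, Matrix.trace_smul, smul_eq_mul]
  have htrPψ : Matrix.trace (P * ψ) = star v ⬝ᵥ (P *ᵥ v) := trace_mul_vmv P v (star v)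
  have htrval : Matrix.trace (ψ * (P * ψ * P)) = Matrix.trace (P * ψ) ^ 2 := by
    rw [trace_mul_comm]
    rw [show Matrix.trace ((P * ψ * P) * ψ) = star v ⬝ᵥ ((P * ψ * P) *ᵥ v) from
      trace_mul_vmv _ v (star v)]
    rw [show (P * ψ * P) *ᵥ v = P *ᵥ (ψ *ᵥ (P *ᵥ v)) by
      rw [← Matrix.mulVec_mulVec, ← Matrix.mulVec_mulVec]]
    rw [hψv, Matrix.mulVec_smul, dotProduct_smul, smul_eq_mul, htrPψ]
    ring
  -- complex identities
  have eq1C : ∑ u : Fin n → Fin 4, ((T u : ℝ) : ℂ) * ((T u : ℝ) : ℂ)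
      = (2 ^ n : ℂ) := by
    have := pauli_parseval n ψ ψ
    simp_rw [hreal] at this
    rw [this, htr1, mul_one]
  have eq2C : ∑ u : Fin n → Fin 4, ((Eps n s u : ℝ) : ℂ) * (((T u : ℝ) : ℂ) * ((T u : ℝ) : ℂ))
      = (2 ^ n : ℂ) * ((T s : ℝ) : ℂ) ^ 2 := by
    have := pauli_parseval n ψ (P * ψ * P)
    simp_rw [htrconj, hreal] at this
    rw [show (∑ u : Fin n → Fin 4, ((T u : ℝ) : ℂ) * (((Eps n s u : ℝ) : ℂ) * ((T u : ℝ) : ℂ)))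
        = ∑ u : Fin n → Fin 4, ((Eps n s u : ℝ) : ℂ) * (((T u : ℝ) : ℂ) * ((T u : ℝ) : ℂ))
      from Finset.sum_congr rfl fun u _ => by ring] at this
    rw [this, htrval, hreal s]
  -- real identities
  have eq1 : ∑ u : Fin n → Fin 4, (T u) ^ 2 = 2 ^ n := by
    have : (((∑ u : Fin n → Fin 4, (T u) ^ 2 : ℝ)) : ℂ) = ((2 ^ n : ℝ) : ℂ) := by
      push_cast
      simpa [sq] using eq1C
    exact_mod_cast this
  have eq2 : ∑ u : Fin n → Fin 4, Eps n s u * (T u) ^ 2 = 2 ^ n * (T s) ^ 2 := by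
    have : (((∑ u : Fin n → Fin 4, Eps n s u * (T u) ^ 2 : ℝ)) : ℂ)
        = (((2 ^ n * (T s) ^ 2 : ℝ)) : ℂ) := by
      push_cast
      simpa [sq] using eq2C
    exact_mod_cast this
  -- sign characterization on the filter
  have hsign : ∀ u : Fin n → Fin 4,
      (1 + Eps n s u) * (T u) ^ 2
        = if P * PauliOp n u = PauliOp n u * P then 2 * (T u) ^ 2 else 0 := by
    intro u
    have hcomm := PauliOp_comm n s u
    rw [← hP] at hcomm
    have hinv : (PauliOp n u * P) * (P * PauliOp n u) = 1 := by
      rw [show (PauliOp n u * P) * (P * PauliOp n u)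
          = PauliOp n u * (P * P) * PauliOp n u by simp only [mul_assoc], hP,
        PauliOp_sq, mul_one, PauliOp_sq]
    have hne : PauliOp n u * P ≠ 0 := by
      intro h0
      have : (0 : Matrix (Fin n → Fin 2) (Fin n → Fin 2) ℂ) = 1 := by
        rw [← hinv, h0, zero_mul]
      have h11 := congrFun (congrFun this (fun _ => 0)) (fun _ => 0)
      simp [Matrix.one_apply] at h11
    by_cases hc : P * PauliOp n u = PauliOp n u * P
    · rw [if_pos hc]
      have hE1 : Eps n s u = 1 := by
        rcases Eps_cases n s u with h | h
        · exact h
        · exfalso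
          rw [h] at hcomm
          rw [hc] at hcomm
          have : (2 : ℂ) • (PauliOp n u * P) = 0 := by
            have := hcomm
            push_cast at this
            rw [neg_one_smul] at this
            have h2 : PauliOp n u * P + PauliOp n u * P = 0 := by
              nth_rewrite 1 [this]; exact neg_add_cancel _
            rw [two_smul]; exact h2
          have := smul_eq_zero.mp this
          rcases this with h2 | h2
          · norm_num at h2
          · exact hne h2
      rw [hE1]; ring
    · rw [if_neg hc]
      have hE1 : Eps n s u = -1 := by
        rcases Eps_cases n s u with h | h
        · exfalso
          rw [h] at hcomm
          push_cast at hcomm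
          rw [one_smul] at hcomm
          exact hc hcomm
        · exact h
      rw [hE1]; ring
  -- assemble
  have hsum : ∑ u ∈ Finset.univ.filter (fun u : Fin n → Fin 4 =>
        P * PauliOp n u = PauliOp n u * P), 2 * (T u) ^ 2
      = 2 ^ n + 2 ^ n * (T s) ^ 2 := by
    rw [Finset.sum_filter]
    calc ∑ u : Fin n → Fin 4,
          (if P * PauliOp n u = PauliOp n u * P then 2 * (T u) ^ 2 else 0)
        = ∑ u : Fin n → Fin 4, (1 + Eps n s u) * (T u) ^ 2 :=
          (Finset.sum_congr rfl fun u _ => (hsign u).symm)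
      _ = ∑ u : Fin n → Fin 4, ((T u) ^ 2 + Eps n s u * (T u) ^ 2) := by
          apply Finset.sum_congr rfl; intro u _; ring
      _ = 2 ^ n + 2 ^ n * (T s) ^ 2 := by
          rw [Finset.sum_add_distrib, eq1, eq2]
  have hpos : (0 : ℝ) < 2 ^ n := by positivity
  have hgoal : ∑ u ∈ Finset.univ.filter (fun u : Fin n → Fin 4 =>
        P * PauliOp n u = PauliOp n u * P), pDist n ψ u
      = (1 + (T s) ^ 2) / 2 := by
    have : ∑ u ∈ Finset.univ.filter (fun u : Fin n → Fin 4 =>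
        P * PauliOp n u = PauliOp n u * P), pDist n ψ u
        = (∑ u ∈ Finset.univ.filter (fun u : Fin n → Fin 4 =>
            P * PauliOp n u = PauliOp n u * P), 2 * (T u) ^ 2) / (2 * 2 ^ n) := by
      rw [Finset.sum_div]
      apply Finset.sum_congr rfl; intro u _
      unfold pDist
      rw [show (Matrix.trace (PauliOp n u * ψ)).re = T u from rfl]
      field_simp
    rw [this, hsum]
    field_simp
  exact hgoal
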